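/- For a monoid S the following are equivalent: (i) every coproduct of injective right S-acts is injective; (ii) there exist injective right S-acts A and B such that the coproduct A ⊔ B is weakly injective; (iii) there exists a decomposable weakly injective right S-act; (iv) S is left reversible; (v) every subact of every indecomposable right S-act is indecomposable; (vi) every subact of every indecomposable injective right S-act is indecomposable; (vii) every indecomposable injective right S-act contains exactly one zero element. -/

import Mathlib

universe u

/-- A right `S`-act structure on a nonempty type `A`: a right action of the monoid `S`. -/
class RightAct (S : Type u) [Monoid S] (A : Type u) : Type u where
  act : A → S → A
  act_one : ∀ a : A, act a 1 = a
  act_mul : ∀ (a : A) (s t : S), act (act a s) t = act a (s * t)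
  nonempty : Nonempty A

infixl:70 " ⊛ " => RightAct.act

/-- `S` is left reversible: every two right ideals (equiv. principal ones) intersect. -/
def LeftReversible (S : Type u) [Monoid S] : Prop :=
  ∀ a b : S, ∃ u v : S, a * u = b * v

/-- A left zero element of the monoid `S`. -/
def IsLeftZero (S : Type u) [Monoid S] (z : S) : Prop :=
  ∀ s : S, z * s = z

/-- `f : A → B` is a homomorphism of right `S`-acts. -/
def IsActHom (S : Type u) [Monoid S] {A B : Type u} [RightAct S A] [RightAct S B]
    (f : A → B) : Prop :=
  ∀ (a : A) (s : S), f (a ⊛ s) = f a ⊛ s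

/-- The restriction of `f : A → B` to the subset `C` is a homomorphism of right `S`-acts. -/
def IsActHomOn (S : Type u) [Monoid S] {A B : Type u} [RightAct S A] [RightAct S B]
    (f : A → B) (C : Set A) : Prop :=
  ∀ a ∈ C, ∀ s : S, f (a ⊛ s) = f a ⊛ s

/-- A subact: a nonempty subset closed under the action. -/
def IsSubact (S : Type u) [Monoid S] {A : Type u} [RightAct S A] (C : Set A) : Prop :=
  C.Nonempty ∧ ∀ a ∈ C, ∀ s : S, a ⊛ s ∈ C

/-- A zero element of an act: fixed by the action of every `s ∈ S`. -/
def IsZeroElem (S : Type u) [Monoid S] {A : Type u} [RightAct S A] (θ : A) : Prop :=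
  ∀ s : S, θ ⊛ s = θ

/-- A subset `D` (viewed as an act) is decomposable: it is the disjoint union of two
nonempty subacts. -/
def DecomposableSet (S : Type u) [Monoid S] {A : Type u} [RightAct S A] (D : Set A) : Prop :=
  ∃ B C : Set A, IsSubact S B ∧ IsSubact S C ∧ B ∪ C = D ∧ B ∩ C = ∅

/-- A subset (viewed as an act) is indecomposable. -/
def IndecomposableSet (S : Type u) [Monoid S] {A : Type u} [RightAct S A] (D : Set A) : Prop :=
  ¬ DecomposableSet S D

/-- The act `A` is decomposable. -/
def Decomposable (S : Type u) [Monoid S] (A : Type u) [RightAct S A] : Prop :=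
  DecomposableSet S (Set.univ : Set A)

/-- The act `A` is indecomposable. -/
def Indecomposable (S : Type u) [Monoid S] (A : Type u) [RightAct S A] : Prop :=
  ¬ Decomposable S A

/-- A cyclic act: generated by a single element. -/
def CyclicAct (S : Type u) [Monoid S] (A : Type u) [RightAct S A] : Prop :=
  ∃ a : A, ∀ x : A, ∃ s : S, x = a ⊛ s

/-- `A` is a retract of `B`. -/
def IsRetractOf (S : Type u) [Monoid S] (A B : Type u) [RightAct S A] [RightAct S B] : Prop :=
  ∃ (i : A → B) (p : B → A), IsActHom S i ∧ IsActHom S p ∧ ∀ a : A, p (i a) = a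

/-- `Q` is an injective act: every homomorphism from a subact `C` of any act `B` into `Q`
extends to `B`. -/
def ActInjective (S : Type u) [Monoid S] (Q : Type u) [RightAct S Q] : Prop :=
  ∀ (B : Type u) [RightAct S B], ∀ C : Set B, IsSubact S C →
    ∀ f : B → Q, IsActHomOn S f C →
      ∃ g : B → Q, IsActHom S g ∧ Set.EqOn g f C

/-- `Q` is InC-injective: injective relative to all embeddings into indecomposable acts. -/
def InCInjective (S : Type u) [Monoid S] (Q : Type u) [RightAct S Q] : Prop :=
  ∀ (B : Type u) [RightAct S B], Indecomposable S B → ∀ C : Set B, IsSubact S C →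
    ∀ f : B → Q, IsActHomOn S f C →
      ∃ g : B → Q, IsActHom S g ∧ Set.EqOn g f C

/-- `Q` is InD-injective: injective relative to all embeddings of indecomposable acts. -/
def InDInjective (S : Type u) [Monoid S] (Q : Type u) [RightAct S Q] : Prop :=
  ∀ (B : Type u) [RightAct S B], ∀ C : Set B, IsSubact S C → IndecomposableSet S C →
    ∀ f : B → Q, IsActHomOn S f C →
      ∃ g : B → Q, IsActHom S g ∧ Set.EqOn g f C

/-- `Q` is PInD-injective: every monomorphism from an indecomposable subact extends. -/
def PInDInjective (S : Type u) [Monoid S] (Q : Type u) [RightAct S Q] : Prop :=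
  ∀ (B : Type u) [RightAct S B], ∀ C : Set B, IsSubact S C → IndecomposableSet S C →
    ∀ f : B → Q, IsActHomOn S f C → Set.InjOn f C →
      ∃ g : B → Q, IsActHom S g ∧ Set.EqOn g f C

/-- `A` is quasi injective: homomorphisms from subacts of `A` to `A` extend to `A`. -/
def QuasiInjective (S : Type u) [Monoid S] (A : Type u) [RightAct S A] : Prop :=
  ∀ C : Set A, IsSubact S C → ∀ f : A → A, IsActHomOn S f C →
    ∃ g : A → A, IsActHom S g ∧ Set.EqOn g f C

/-- `A` is pseudo injective: monomorphisms from subacts of any act into `A` extend. -/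
def PseudoInjective (S : Type u) [Monoid S] (A : Type u) [RightAct S A] : Prop :=
  ∀ (C : Type u) [RightAct S C], ∀ B : Set C, IsSubact S B →
    ∀ f : C → A, IsActHomOn S f B → Set.InjOn f B →
      ∃ g : C → A, IsActHom S g ∧ Set.EqOn g f B

/-- A subact `Q` of `A` (viewed as an act in its own right) is injective. -/
def ActInjectiveSet (S : Type u) [Monoid S] {A : Type u} [RightAct S A] (Q : Set A) : Prop :=
  ∀ (B : Type u) [RightAct S B], ∀ C : Set B, IsSubact S C →
    ∀ f : B → A, IsActHomOn S f C → (∀ c ∈ C, f c ∈ Q) →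
      ∃ g : B → A, IsActHom S g ∧ (∀ b : B, g b ∈ Q) ∧ Set.EqOn g f C

/-- A subact `Q` of `A` (viewed as an act in its own right) is InD-injective. -/
def InDInjectiveSet (S : Type u) [Monoid S] {A : Type u} [RightAct S A] (Q : Set A) : Prop :=
  ∀ (B : Type u) [RightAct S B], ∀ C : Set B, IsSubact S C → IndecomposableSet S C →
    ∀ f : B → A, IsActHomOn S f C → (∀ c ∈ C, f c ∈ Q) →
      ∃ g : B → A, IsActHom S g ∧ (∀ b : B, g b ∈ Q) ∧ Set.EqOn g f C

/-- A subact `Q` of `A` (viewed as an act in its own right) is PInD-injective. -/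
def PInDInjectiveSet (S : Type u) [Monoid S] {A : Type u} [RightAct S A] (Q : Set A) : Prop :=
  ∀ (B : Type u) [RightAct S B], ∀ C : Set B, IsSubact S C → IndecomposableSet S C →
    ∀ f : B → A, IsActHomOn S f C → Set.InjOn f C → (∀ c ∈ C, f c ∈ Q) →
      ∃ g : B → A, IsActHom S g ∧ (∀ b : B, g b ∈ Q) ∧ Set.EqOn g f C

/-- The monoid `S` as a right act over itself, by multiplication. -/
instance selfAct (S : Type u) [Monoid S] : RightAct S S where
  act a s := a * s
  act_one := mul_one
  act_mul a s t := mul_assoc a s t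
  nonempty := ⟨1⟩

/-- `Q` is weakly injective: homomorphisms from right ideals of `S` into `Q` extend to `S`. -/
def WeaklyInjective (S : Type u) [Monoid S] (Q : Type u) [RightAct S Q] : Prop :=
  ∀ I : Set S, IsSubact S I → ∀ f : S → Q, IsActHomOn S f I →
    ∃ g : S → Q, IsActHom S g ∧ Set.EqOn g f I

/-- The relation whose equivalence closure has the indecomposable components as classes. -/
def ActRel (S : Type u) [Monoid S] {A : Type u} [RightAct S A] (a b : A) : Prop :=
  ∃ s : S, b = a ⊛ s

/-- The indecomposable component of the element `a` of an act. -/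
def ActComponent (S : Type u) [Monoid S] {A : Type u} [RightAct S A] (a : A) : Set A :=
  {b | Relation.EqvGen (ActRel S) a b}

/-- The coproduct (disjoint union) of a family of acts. -/
instance sigmaAct (S : Type u) [Monoid S] {I : Type u} [Nonempty I] (A : I → Type u)
    [∀ i, RightAct S (A i)] : RightAct S (Σ i, A i) where
  act x s := ⟨x.1, x.2 ⊛ s⟩
  act_one x := by cases x; simp [RightAct.act_one]
  act_mul x s t := by cases x; simp [RightAct.act_mul]
  nonempty := ⟨⟨Classical.arbitrary I, Classical.choice (RightAct.nonempty (S := S))⟩⟩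


/-- The coproduct (disjoint union) of two acts. -/
instance sumAct (S : Type u) [Monoid S] (A B : Type u) [RightAct S A] [RightAct S B] :
    RightAct S (A ⊕ B) where
  act x s := Sum.elim (fun a => Sum.inl (a ⊛ s)) (fun b => Sum.inr (b ⊛ s)) x
  act_one x := by cases x <;> simp [RightAct.act_one]
  act_mul x s t := by cases x <;> simp [RightAct.act_mul]
  nonempty := ⟨Sum.inl (Classical.choice (RightAct.nonempty (S := S) (A := A)))⟩


section Aux

variable {S : Type u} [Monoid S]

/-- The one-point act. -/
instance punitAct : RightAct S PUnit.{u+1} where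
  act _ _ := PUnit.unit
  act_one _ := rfl
  act_mul _ _ _ := rfl
  nonempty := ⟨PUnit.unit⟩

lemma punit_injective : ActInjective S PUnit.{u+1} :=
  fun _ _ _ _ _ _ => ⟨fun _ => PUnit.unit, fun _ _ => rfl, fun _ _ => rfl⟩

lemma weak_of_inj {Q : Type u} [RightAct S Q] (h : ActInjective S Q) :
    WeaklyInjective S Q :=
  fun I hI f hf => h S I hI f hf

lemma inj_has_zero {Q : Type u} [RightAct S Q] (h : ActInjective S Q) :
    ∃ θ : Q, IsZeroElem S θ := by
  obtain ⟨q0⟩ := RightAct.nonempty (S := S) (A := Q)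
  obtain ⟨g, hg, -⟩ := h (Q ⊕ PUnit.{u+1}) (Set.range Sum.inl)
    ⟨⟨Sum.inl q0, ⟨q0, rfl⟩⟩, by rintro x ⟨q, rfl⟩ s; exact ⟨q ⊛ s, rfl⟩⟩
    (Sum.elim id fun _ => q0)
    (by rintro x ⟨q, rfl⟩ s; rfl)
  exact ⟨g (Sum.inr PUnit.unit), fun s => (hg (Sum.inr PUnit.unit) s).symm⟩

lemma inj_of_retract {A B : Type u} [RightAct S A] [RightAct S B]
    (i : A → B) (p : B → A) (hi : IsActHom S i) (hp : IsActHom S p)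
    (hpi : ∀ a, p (i a) = a) (hB : ActInjective S B) : ActInjective S A := by
  intro B' _ C hC f hf
  obtain ⟨g, hg, hge⟩ := hB B' C hC (fun b => i (f b))
    (fun c hc s => by show i (f (c ⊛ s)) = i (f c) ⊛ s; rw [hf c hc s, hi])
  refine ⟨fun b => p (g b), fun a s => by show p (g (a ⊛ s)) = p (g a) ⊛ s; rw [hg, hp],
    fun c hc => ?_⟩
  show p (g c) = f c
  rw [hge hc]
  exact hpi (f c)

lemma eqvgen_common (hrev : LeftReversible S) {A : Type u} [RightAct S A] {x y : A}
    (h : Relation.EqvGen (ActRel S) x y) : ∃ s t : S, x ⊛ s = y ⊛ t := by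
  induction h with
  | rel a b hab => obtain ⟨s, rfl⟩ := hab; exact ⟨s, 1, (RightAct.act_one _).symm⟩
  | refl a => exact ⟨1, 1, rfl⟩
  | symm a b _ ih => obtain ⟨s, t, hh⟩ := ih; exact ⟨t, s, hh.symm⟩
  | trans a b c _ _ ih1 ih2 =>
      obtain ⟨s, t, h1⟩ := ih1
      obtain ⟨u, v, h2⟩ := ih2
      obtain ⟨p, q, hpq⟩ := hrev t u
      refine ⟨s * p, v * q, ?_⟩
      calc a ⊛ (s * p) = (a ⊛ s) ⊛ p := (RightAct.act_mul ..).symm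
        _ = (b ⊛ t) ⊛ p := by rw [h1]
        _ = b ⊛ (t * p) := RightAct.act_mul ..
        _ = b ⊛ (u * q) := by rw [hpq]
        _ = (b ⊛ u) ⊛ q := (RightAct.act_mul ..).symm
        _ = (c ⊛ v) ⊛ q := by rw [h2]
        _ = c ⊛ (v * q) := RightAct.act_mul ..

lemma indec_pairwise (hrev : LeftReversible S) {A : Type u} [RightAct S A]
    (hind : Indecomposable S A) (x y : A) : ∃ s t : S, x ⊛ s = y ⊛ t := by
  by_contra hxy
  push_neg at hxy
  apply hind
  refine ⟨{z | ∃ s t, x ⊛ s = z ⊛ t}, {z | ∃ s t, x ⊛ s = z ⊛ t}ᶜ,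
    ⟨⟨x, 1, 1, rfl⟩, ?_⟩, ⟨⟨y, fun ⟨s, t, h⟩ => (hxy s t) h⟩, ?_⟩,
    Set.union_compl_self _, Set.inter_compl_self _⟩
  · rintro z ⟨s, t, h⟩ u
    obtain ⟨p, q, hpq⟩ := hrev t u
    refine ⟨s * p, q, ?_⟩
    calc x ⊛ (s * p) = (x ⊛ s) ⊛ p := (RightAct.act_mul ..).symm
      _ = (z ⊛ t) ⊛ p := by rw [h]
      _ = z ⊛ (t * p) := RightAct.act_mul ..
      _ = z ⊛ (u * q) := by rw [hpq]
      _ = (z ⊛ u) ⊛ q := (RightAct.act_mul ..).symm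
  · rintro z hz u ⟨s, t, h⟩
    exact hz ⟨s, u * t, by rw [h, RightAct.act_mul]⟩

lemma subact_indec (hrev : LeftReversible S) {A : Type u} [RightAct S A]
    (hind : Indecomposable S A) (C : Set A) : IndecomposableSet S C := by
  rintro ⟨B1, B2, hB1, hB2, hunion, hinter⟩
  obtain ⟨b, hb⟩ := hB1.1
  obtain ⟨c, hc⟩ := hB2.1
  obtain ⟨s, t, hst⟩ := indec_pairwise hrev hind b c
  have h12 : b ⊛ s ∈ B1 ∩ B2 := ⟨hB1.2 b hb s, by rw [hst]; exact hB2.2 c hc t⟩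
  rw [hinter] at h12
  exact h12

end Aux
section Aux2

variable {S : Type u} [Monoid S]

lemma mk_cast {I : Type u} {A : I → Type u} (x : Σ j, A j) {i : I} (h : x.1 = i) :
    (⟨i, h ▸ x.2⟩ : Σ j, A j) = x := by subst h; rfl

lemma cast_act {I : Type u} [Nonempty I] {A : I → Type u} [∀ i, RightAct S (A i)]
    {i j : I} (h : j = i) (y : A j) (s : S) : (h ▸ y) ⊛ s = h ▸ (y ⊛ s) := by subst h; rfl

/-- Projection of the coproduct onto one component, sending other components to a
fixed zero element. -/
noncomputable def sigProj {I : Type u} [Nonempty I] {A : I → Type u} [∀ i, RightAct S (A i)]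
    (i : I) (θ : A i) (x : Σ j, A j) : A i :=
  @dite _ (x.1 = i) (Classical.dec _) (fun h => h ▸ x.2) (fun _ => θ)

lemma sigProj_pos {I : Type u} [Nonempty I] {A : I → Type u} [∀ i, RightAct S (A i)]
    (i : I) (θ : A i) (x : Σ j, A j) (h : x.1 = i) :
    sigProj (S := S) i θ x = h ▸ x.2 := dif_pos h

lemma sigProj_neg {I : Type u} [Nonempty I] {A : I → Type u} [∀ i, RightAct S (A i)]
    (i : I) (θ : A i) (x : Σ j, A j) (h : ¬ x.1 = i) :
    sigProj (S := S) i θ x = θ := dif_neg h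

lemma mk_sigProj {I : Type u} [Nonempty I] {A : I → Type u} [∀ i, RightAct S (A i)]
    (i : I) (θ : A i) (x : Σ j, A j) (h : x.1 = i) :
    (⟨i, sigProj (S := S) i θ x⟩ : Σ j, A j) = x := by
  rw [sigProj_pos (S := S) i θ x h]; exact mk_cast x h

lemma sigProj_hom {I : Type u} [Nonempty I] {A : I → Type u} [∀ i, RightAct S (A i)]
    (i : I) (θ : A i) (hθ : IsZeroElem S θ) :
    IsActHom S (sigProj (S := S) (A := A) i θ) := by
  intro x s
  by_cases h : x.1 = i
  · have hxs : (x ⊛ s).1 = i := h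
    rw [sigProj_pos (S := S) i θ x h, sigProj_pos (S := S) i θ (x ⊛ s) hxs]
    exact (cast_act h x.2 s).symm
  · have hxs : ¬ (x ⊛ s).1 = i := h
    rw [sigProj_neg (S := S) i θ x h, sigProj_neg (S := S) i θ (x ⊛ s) hxs]
    exact (hθ s).symm

lemma leftrev_coprod_inj (hrev : LeftReversible S) (I : Type u) [Nonempty I]
    (A : I → Type u) [∀ i, RightAct S (A i)] (hA : ∀ i, ActInjective S (A i)) :
    ActInjective S (Σ i, A i) := by
  classical
  choose θ hθ using fun i => inj_has_zero (hA i)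
  intro B _ C hC f hf
  have hext : ∀ i : I, ∃ h : B → A i, IsActHom S h ∧
      ∀ c ∈ C, (f c).1 = i → h c = sigProj (S := S) i (θ i) (f c) := by
    intro i
    by_cases hne : ∃ c ∈ C, (f c).1 = i
    · obtain ⟨c0, hc0, hc0i⟩ := hne
      have hsub : IsSubact S {c | c ∈ C ∧ (f c).1 = i} := by
        refine ⟨⟨c0, hc0, hc0i⟩, ?_⟩
        rintro c ⟨hc, hci⟩ s
        refine ⟨hC.2 c hc s, ?_⟩
        rw [hf c hc s]
        exact hci
      obtain ⟨g, hg, hge⟩ := hA i B {c | c ∈ C ∧ (f c).1 = i} hsub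
        (fun b => sigProj (S := S) i (θ i) (f b))
        (by rintro c ⟨hc, hci⟩ s
            show sigProj (S := S) i (θ i) (f (c ⊛ s)) = sigProj (S := S) i (θ i) (f c) ⊛ s
            rw [hf c hc s]
            exact sigProj_hom i (θ i) (hθ i) (f c) s)
      exact ⟨g, hg, fun c hc hci => hge ⟨hc, hci⟩⟩
    · push_neg at hne
      exact ⟨fun _ => θ i, fun b s => (hθ i s).symm,
        fun c hc hci => absurd hci (hne c hc)⟩
  choose h hhom hagree using hext
  have hfst : ∀ c ∈ C, ∀ c' ∈ C, Relation.EqvGen (ActRel S) c c' → (f c).1 = (f c').1 := by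
    intro c hc c' hc' hcc
    obtain ⟨s, t, hst⟩ := eqvgen_common hrev hcc
    have h1 : (f (c ⊛ s)).1 = (f c).1 := by rw [hf c hc s]; rfl
    have h2 : (f (c' ⊛ t)).1 = (f c').1 := by rw [hf c' hc' t]; rfl
    rw [← h1, ← h2, hst]
  have hP : ∀ (b : B) (s : S),
      (∃ c, c ∈ C ∧ Relation.EqvGen (ActRel S) (b ⊛ s) c) ↔
      (∃ c, c ∈ C ∧ Relation.EqvGen (ActRel S) b c) := by
    intro b s
    constructor
    · rintro ⟨c, hc, hrel⟩
      exact ⟨c, hc, Relation.EqvGen.trans _ _ _ (Relation.EqvGen.rel _ _ ⟨s, rfl⟩) hrel⟩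
    · rintro ⟨c, hc, hrel⟩
      exact ⟨c, hc, Relation.EqvGen.trans _ _ _
        (Relation.EqvGen.symm _ _ (Relation.EqvGen.rel _ _ ⟨s, rfl⟩)) hrel⟩
  obtain ⟨i0⟩ := ‹Nonempty I›
  refine ⟨fun b => if hb : ∃ c, c ∈ C ∧ Relation.EqvGen (ActRel S) b c then
      ⟨(f hb.choose).1, h (f hb.choose).1 b⟩ else ⟨i0, θ i0⟩, ?_, ?_⟩
  · intro b s
    show (if hb : ∃ c, c ∈ C ∧ Relation.EqvGen (ActRel S) (b ⊛ s) c then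
        (⟨(f hb.choose).1, h (f hb.choose).1 (b ⊛ s)⟩ : Σ i, A i) else ⟨i0, θ i0⟩) =
      (if hb : ∃ c, c ∈ C ∧ Relation.EqvGen (ActRel S) b c then
        (⟨(f hb.choose).1, h (f hb.choose).1 b⟩ : Σ i, A i) else ⟨i0, θ i0⟩) ⊛ s
    by_cases hb : ∃ c, c ∈ C ∧ Relation.EqvGen (ActRel S) b c
    · have hbs : ∃ c, c ∈ C ∧ Relation.EqvGen (ActRel S) (b ⊛ s) c := (hP b s).mpr hb
      rw [dif_pos hb, dif_pos hbs]
      have hidx : (f hbs.choose).1 = (f hb.choose).1 := by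
        refine hfst _ hbs.choose_spec.1 _ hb.choose_spec.1 ?_
        refine Relation.EqvGen.trans _ _ _
          (Relation.EqvGen.symm _ _ hbs.choose_spec.2) ?_
        exact Relation.EqvGen.trans _ _ _
          (Relation.EqvGen.symm _ _ (Relation.EqvGen.rel _ _ ⟨s, rfl⟩)) hb.choose_spec.2
      rw [hidx]
      exact congrArg (Sigma.mk (f hb.choose).1) (hhom _ b s)
    · have hbs : ¬ ∃ c, c ∈ C ∧ Relation.EqvGen (ActRel S) (b ⊛ s) c :=
        fun hh => hb ((hP b s).mp hh)
      rw [dif_neg hb, dif_neg hbs]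
      exact congrArg (Sigma.mk i0) (hθ i0 s).symm
  · intro c hc
    have hPc : ∃ c', c' ∈ C ∧ Relation.EqvGen (ActRel S) c c' :=
      ⟨c, hc, Relation.EqvGen.refl c⟩
    show (if hb : ∃ c', c' ∈ C ∧ Relation.EqvGen (ActRel S) c c' then
        (⟨(f hb.choose).1, h (f hb.choose).1 c⟩ : Σ i, A i) else ⟨i0, θ i0⟩) = f c
    rw [dif_pos hPc]
    have hidx : (f hPc.choose).1 = (f c).1 :=
      hfst _ hPc.choose_spec.1 c hc (Relation.EqvGen.symm _ _ hPc.choose_spec.2)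
    rw [hidx, hagree (f c).1 c hc rfl]
    exact mk_sigProj (f c).1 (θ (f c).1) (f c) rfl

end Aux2
section Aux3

variable {S : Type u} [Monoid S]

/-- The cofree act on a set `X`. -/
instance cofreeAct (X : Type u) [Nonempty X] : RightAct S (S → X) where
  act f s := fun t => f (s * t)
  act_one f := funext fun t => by show f (1 * t) = f t; rw [one_mul]
  act_mul f s t := funext fun r => by show f (s * (t * r)) = f (s * t * r); rw [mul_assoc]
  nonempty := ⟨fun _ => Classical.arbitrary X⟩

lemma cofree_injective (X : Type u) [Nonempty X] : ActInjective S (S → X) := by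
  intro B _ C hC f hf
  refine ⟨fun b t => f (b ⊛ t) 1, fun b s => funext fun t => ?_, fun c hc => funext fun t => ?_⟩
  · show f ((b ⊛ s) ⊛ t) 1 = f (b ⊛ (s * t)) 1
    rw [RightAct.act_mul]
  · show f (c ⊛ t) 1 = f c t
    rw [hf c hc t]
    show (f c) (t * 1) = f c t
    rw [mul_one]

/-- The target set for the key cofree act. -/
def XX (S : Type u) : Type u := S ⊕ ULift.{u} Bool

instance : Nonempty (XX S) := ⟨Sum.inr ⟨true⟩⟩

local notation:70 f:70 " ⊙ " s:71 => @RightAct.act _ _ _ (cofreeAct _) f s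

/-- The canonical embedding of `S` into the cofree act on `XX S`. -/
def iota (S : Type u) [Monoid S] : S → (S → XX S) := fun s t => Sum.inl (s * t)

/-- The component of `iota 1` in the cofree act on `XX S`. -/
def DD (S : Type u) [Monoid S] : Set (S → XX S) :=
  {h | Relation.EqvGen (@ActRel S _ _ (cofreeAct (XX S))) (iota S 1) h}

lemma DD_act {h : S → XX S} (hh : h ∈ DD S) (s : S) : (h ⊙ s) ∈ DD S :=
  Relation.EqvGen.trans _ _ _ hh (Relation.EqvGen.rel _ _ ⟨s, rfl⟩)

lemma DD_back {h : S → XX S} {s : S} (hh : (h ⊙ s) ∈ DD S) : h ∈ DD S :=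
  Relation.EqvGen.trans _ _ _ hh
    (Relation.EqvGen.symm _ _ (Relation.EqvGen.rel _ _ ⟨s, rfl⟩))

/-- The component of `iota 1` as an act in its own right. -/
instance QQact : RightAct S {h : S → XX S // h ∈ DD S} where
  act x s := ⟨x.1 ⊙ s, DD_act x.2 s⟩
  act_one x := Subtype.ext (RightAct.act_one x.1)
  act_mul x s t := Subtype.ext (RightAct.act_mul x.1 s t)
  nonempty := ⟨⟨iota S 1, Relation.EqvGen.refl _⟩⟩

local notation:70 f:70 " ⊘ " s:71 => @RightAct.act _ _ _ QQact f s

open Classical in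
/-- A retraction of the cofree act onto the component of `iota 1`. -/
noncomputable def rr (z : {h : S → XX S // h ∈ DD S}) (e : S → XX S) :
    {h : S → XX S // h ∈ DD S} :=
  if he : e ∈ DD S then ⟨e, he⟩ else z

lemma rr_hom (z : {h : S → XX S // h ∈ DD S}) (hz : IsZeroElem S z) :
    IsActHom S (rr z) := by
  intro e s
  simp only [rr]
  by_cases he : e ∈ DD S
  · rw [dif_pos he, dif_pos (DD_act he s)]
    exact Subtype.ext rfl
  · rw [dif_neg he, dif_neg (fun hh => he (DD_back hh))]
    exact (hz s).symm

lemma rr_retr (z : {h : S → XX S // h ∈ DD S}) (x : {h : S → XX S // h ∈ DD S}) :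
    rr z x.1 = x := by
  simp only [rr]
  rw [dif_pos x.2]

lemma QQ_inj (z : {h : S → XX S // h ∈ DD S}) (hz : IsZeroElem S z) :
    ActInjective S {h : S → XX S // h ∈ DD S} :=
  inj_of_retract (fun x => x.1) (rr z) (fun _ _ => rfl) (rr_hom z hz) (rr_retr z)
    (cofree_injective (XX S))

lemma QQ_indec : Indecomposable S {h : S → XX S // h ∈ DD S} := by
  rintro ⟨B1, B2, hB1, hB2, huniv, hinter⟩
  have key : ∀ u v : S → XX S, Relation.EqvGen (@ActRel S _ _ (cofreeAct (XX S))) u v →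
      ∀ (hu : u ∈ DD S) (hv : v ∈ DD S),
      ((⟨u, hu⟩ : {h : S → XX S // h ∈ DD S}) ∈ B1 ↔
        (⟨v, hv⟩ : {h : S → XX S // h ∈ DD S}) ∈ B1) := by
    intro u v huv
    induction huv with
    | rel u v hr =>
      obtain ⟨s, rfl⟩ := hr
      intro hu hv
      constructor
      · intro h
        exact hB1.2 ⟨u, hu⟩ h s
      · intro h
        by_contra hu1
        have hu2 : (⟨u, hu⟩ : {h : S → XX S // h ∈ DD S}) ∈ B2 := by
          have hmem : (⟨u, hu⟩ : {h : S → XX S // h ∈ DD S}) ∈ B1 ∪ B2 := by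
            rw [huniv]; trivial
          exact hmem.resolve_left hu1
        have h2 : ((⟨u, hu⟩ : {h : S → XX S // h ∈ DD S}) ⊘ s) ∈ B2 := hB2.2 _ hu2 s
        have h12 : (⟨u ⊙ s, hv⟩ : {h : S → XX S // h ∈ DD S}) ∈ B1 ∩ B2 := ⟨h, h2⟩
        rw [hinter] at h12
        exact h12
    | refl u => intro hu hv; exact Iff.rfl
    | symm u v _ ih => intro hv hu; exact (ih hu hv).symm
    | trans u v w h1 _ ih1 ih2 =>
      intro hu hw
      have hv : v ∈ DD S := Relation.EqvGen.trans _ _ _ hu h1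
      exact (ih1 hu hv).trans (ih2 hv hw)
  obtain ⟨x, hx⟩ := hB1.1
  obtain ⟨y, hy⟩ := hB2.1
  have hxy : Relation.EqvGen (@ActRel S _ _ (cofreeAct (XX S))) x.1 y.1 :=
    Relation.EqvGen.trans _ _ _ (Relation.EqvGen.symm _ _ x.2) y.2
  have hy1 : y ∈ B1 := (key x.1 y.1 hxy x.2 y.2).mp hx
  have h12 : y ∈ B1 ∩ B2 := ⟨hy1, hy⟩
  rw [hinter] at h12
  exact h12

open Classical in
/-- The auxiliary function connecting `iota 1` to a constant when `aS ∩ bS = ∅`. -/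
noncomputable def hfun (S : Type u) [Monoid S] (a : S) (fl : Bool) : S → XX S :=
  fun t => if ∃ u, t = a * u then Sum.inl t else Sum.inr ⟨fl⟩

lemma hfun_a (a : S) (fl : Bool) : (hfun S a fl ⊙ a) = (iota S 1 ⊙ a) := by
  classical
  funext t
  show (if ∃ u, a * t = a * u then (Sum.inl (a * t) : XX S) else Sum.inr ⟨fl⟩) =
    Sum.inl (1 * (a * t))
  rw [if_pos ⟨t, rfl⟩, one_mul]

lemma hfun_mem (a : S) (fl : Bool) : hfun S a fl ∈ DD S := by
  refine Relation.EqvGen.trans _ (iota S 1 ⊙ a) _ (Relation.EqvGen.rel _ _ ⟨a, rfl⟩) ?_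
  rw [← hfun_a a fl]
  exact Relation.EqvGen.symm _ _ (Relation.EqvGen.rel _ _ ⟨a, rfl⟩)

lemma hfun_b (a b : S) (hab : ∀ u v : S, a * u ≠ b * v) (fl : Bool) :
    (hfun S a fl ⊙ b) = (fun _ => Sum.inr ⟨fl⟩ : S → XX S) := by
  classical
  funext t
  show (if ∃ u, b * t = a * u then (Sum.inl (b * t) : XX S) else Sum.inr ⟨fl⟩) = Sum.inr ⟨fl⟩
  exact if_neg (by rintro ⟨u, hu⟩; exact hab u t hu.symm)

lemma zmem (a b : S) (hab : ∀ u v : S, a * u ≠ b * v) (fl : Bool) :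
    (fun _ => Sum.inr ⟨fl⟩ : S → XX S) ∈ DD S := by
  rw [← hfun_b a b hab fl]
  exact DD_act (hfun_mem a fl) b

lemma zzero (fl : Bool) (hmem : (fun _ => Sum.inr ⟨fl⟩ : S → XX S) ∈ DD S) :
    IsZeroElem S (⟨fun _ => Sum.inr ⟨fl⟩, hmem⟩ : {h : S → XX S // h ∈ DD S}) :=
  fun _ => Subtype.ext rfl

lemma seven_to_four
    (h7 : ∀ (Q : Type u) [RightAct S Q], Indecomposable S Q → ActInjective S Q →
      ∃! θ : Q, IsZeroElem S θ) : LeftReversible S := by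
  by_contra hrev
  simp only [LeftReversible, not_forall, not_exists] at hrev
  obtain ⟨a, b, hab⟩ := hrev
  have hz1 := zmem a b hab true
  have hz2 := zmem a b hab false
  obtain ⟨θ, -, huniq⟩ := h7 {h : S → XX S // h ∈ DD S} QQ_indec
    (QQ_inj _ (zzero true hz1))
  have e1 := huniq _ (zzero true hz1)
  have e2 := huniq _ (zzero false hz2)
  have e3 : (⟨fun _ => Sum.inr ⟨true⟩, hz1⟩ : {h : S → XX S // h ∈ DD S}) =
      ⟨fun _ => Sum.inr ⟨false⟩, hz2⟩ := e1.trans e2.symm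
  have e4 : (Sum.inr ⟨true⟩ : XX S) = Sum.inr ⟨false⟩ :=
    congrArg (fun x => x.1 1) e3
  exact Bool.noConfusion (congrArg ULift.down (Sum.inr_injective e4))

end Aux3
section Aux4

variable {S : Type u} [Monoid S]

lemma three_to_four {Q : Type u} [RightAct S Q] (hdec : Decomposable S Q)
    (hw : WeaklyInjective S Q) : LeftReversible S := by
  classical
  obtain ⟨Q1, Q2, hQ1, hQ2, huniv, hinter⟩ := hdec
  obtain ⟨q1, hq1⟩ := hQ1.1
  obtain ⟨q2, hq2⟩ := hQ2.1
  intro a b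
  by_contra hab
  push_neg at hab
  have hIsub : IsSubact S {x : S | (∃ u, x = a * u) ∨ (∃ v, x = b * v)} := by
    constructor
    · exact ⟨a, Or.inl ⟨1, (mul_one a).symm⟩⟩
    · rintro x (⟨u, rfl⟩ | ⟨v, rfl⟩) s
      · exact Or.inl ⟨u * s, mul_assoc a u s⟩
      · exact Or.inr ⟨v * s, mul_assoc b v s⟩
  have hfhom : IsActHomOn S (fun x => if ∃ u, x = a * u then q1 ⊛ x else q2 ⊛ x)
      {x : S | (∃ u, x = a * u) ∨ (∃ v, x = b * v)} := by
    rintro x (⟨u, rfl⟩ | ⟨v, rfl⟩) s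
    · show (if ∃ u', a * u * s = a * u' then q1 ⊛ (a * u * s) else q2 ⊛ (a * u * s)) =
        (if ∃ u', a * u = a * u' then q1 ⊛ (a * u) else q2 ⊛ (a * u)) ⊛ s
      rw [if_pos ⟨u * s, mul_assoc a u s⟩, if_pos ⟨u, rfl⟩, RightAct.act_mul]
    · have c1 : ¬ ∃ u', b * v = a * u' := by
        rintro ⟨u', h⟩; exact hab u' v h.symm
      have c2 : ¬ ∃ u', b * v * s = a * u' := by
        rintro ⟨u', h⟩; exact hab u' (v * s) (h.symm.trans (mul_assoc b v s))
      show (if ∃ u', b * v * s = a * u' then q1 ⊛ (b * v * s) else q2 ⊛ (b * v * s)) =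
        (if ∃ u', b * v = a * u' then q1 ⊛ (b * v) else q2 ⊛ (b * v)) ⊛ s
      rw [if_neg c2, if_neg c1, RightAct.act_mul]
  obtain ⟨g, hg, hge⟩ := hw _ hIsub _ hfhom
  have hga : g a = q1 ⊛ a := by
    rw [hge (Or.inl ⟨1, (mul_one a).symm⟩)]
    show (if ∃ u, a = a * u then q1 ⊛ a else q2 ⊛ a) = q1 ⊛ a
    rw [if_pos ⟨1, (mul_one a).symm⟩]
  have hgb : g b = q2 ⊛ b := by
    rw [hge (Or.inr ⟨1, (mul_one b).symm⟩)]
    show (if ∃ u, b = a * u then q1 ⊛ b else q2 ⊛ b) = q2 ⊛ b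
    refine if_neg ?_
    rintro ⟨u, hu⟩
    exact hab u 1 (by rw [mul_one]; exact hu.symm)
  have h1a : g (1 * a) = g 1 ⊛ a := hg 1 a
  rw [one_mul] at h1a
  have h1b : g (1 * b) = g 1 ⊛ b := hg 1 b
  rw [one_mul] at h1b
  have h1mem : g 1 ∈ Q1 ∪ Q2 := by rw [huniv]; trivial
  rcases h1mem with h1 | h1
  · have hb1 : g b ∈ Q1 := by rw [h1b]; exact hQ1.2 _ h1 b
    have hb2 : g b ∈ Q2 := by rw [hgb]; exact hQ2.2 _ hq2 b
    have hmem : g b ∈ Q1 ∩ Q2 := ⟨hb1, hb2⟩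
    rw [hinter] at hmem
    exact hmem
  · have ha2 : g a ∈ Q2 := by rw [h1a]; exact hQ2.2 _ h1 a
    have ha1 : g a ∈ Q1 := by rw [hga]; exact hQ1.2 _ hq1 a
    have hmem : g a ∈ Q1 ∩ Q2 := ⟨ha1, ha2⟩
    rw [hinter] at hmem
    exact hmem

lemma sum_punit_inj
    (h1 : ∀ (I : Type u) [Nonempty I] (A : I → Type u) [∀ i, RightAct S (A i)],
        (∀ i, ActInjective S (A i)) → ActInjective S (Σ i, A i)) :
    ActInjective S (PUnit.{u+1} ⊕ PUnit.{u+1}) := by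
  have hsig : ActInjective S (Σ _ : ULift.{u} Bool, PUnit.{u+1}) :=
    h1 (ULift Bool) (fun _ => PUnit) (fun _ => punit_injective)
  refine inj_of_retract
    (Sum.elim (fun _ => ⟨⟨true⟩, PUnit.unit⟩) (fun _ => ⟨⟨false⟩, PUnit.unit⟩))
    (fun x => if x.1.down then Sum.inl PUnit.unit else Sum.inr PUnit.unit)
    ?_ ?_ ?_ hsig
  · intro x s; cases x <;> rfl
  · intro x s
    obtain ⟨⟨bb⟩, u⟩ := x
    cases bb <;> rfl
  · intro x; cases x <;> rfl

end Aux4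

/-- TFAE: (i) coproducts of injective acts are injective; (ii) some
coproduct of two injective acts is weakly injective; (iii) there is a decomposable
weakly injective act; (iv) `S` is left reversible; (v) subacts of indecomposable acts
are indecomposable; (vi) subacts of indecomposable injective acts are indecomposable;
(vii) every indecomposable injective act contains exactly one zero. -/
theorem coproducts_of_injectives_tfae (S : Type u) [Monoid S] :
    List.TFAE [
      ∀ (I : Type u) [Nonempty I] (A : I → Type u) [∀ i, RightAct S (A i)],
        (∀ i, ActInjective S (A i)) → ActInjective S (Σ i, A i),
      ∃ (A B : Type u) (_ : RightAct S A) (_ : RightAct S B),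
        ActInjective S A ∧ ActInjective S B ∧ WeaklyInjective S (A ⊕ B),
      ∃ (Q : Type u) (_ : RightAct S Q), Decomposable S Q ∧ WeaklyInjective S Q,
      LeftReversible S,
      ∀ (A : Type u) [RightAct S A], Indecomposable S A →
        ∀ C : Set A, IsSubact S C → IndecomposableSet S C,
      ∀ (A : Type u) [RightAct S A], Indecomposable S A → ActInjective S A →
        ∀ C : Set A, IsSubact S C → IndecomposableSet S C,
      ∀ (Q : Type u) [RightAct S Q], Indecomposable S Q → ActInjective S Q →
        ∃! θ : Q, IsZeroElem S θ ] := by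
  tfae_have 4 → 1 := by
    intro h4 I _ A _ hA
    exact leftrev_coprod_inj h4 I A hA
  tfae_have 1 → 2 := by
    intro h1
    exact ⟨PUnit, PUnit, punitAct, punitAct, punit_injective, punit_injective,
      weak_of_inj (sum_punit_inj h1)⟩
  tfae_have 2 → 3 := by
    rintro ⟨A, B, iA, iB, hA, hB, hw⟩
    refine ⟨A ⊕ B, sumAct S A B, ?_, hw⟩
    obtain ⟨a0⟩ := RightAct.nonempty (S := S) (A := A)
    obtain ⟨b0⟩ := RightAct.nonempty (S := S) (A := B)
    refine ⟨Set.range Sum.inl, Set.range Sum.inr,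
      ⟨⟨Sum.inl a0, a0, rfl⟩, ?_⟩, ⟨⟨Sum.inr b0, b0, rfl⟩, ?_⟩, ?_, ?_⟩
    · rintro x ⟨q, rfl⟩ s
      exact ⟨q ⊛ s, rfl⟩
    · rintro x ⟨q, rfl⟩ s
      exact ⟨q ⊛ s, rfl⟩
    · refine Set.eq_univ_of_forall ?_
      rintro (a | b)
      · exact Or.inl ⟨a, rfl⟩
      · exact Or.inr ⟨b, rfl⟩
    · refine Set.eq_empty_iff_forall_notMem.mpr ?_
      rintro x ⟨⟨p, rfl⟩, ⟨q, hq⟩⟩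
      exact Sum.inr_ne_inl hq
  tfae_have 3 → 4 := by
    rintro ⟨Q, iQ, hdec, hw⟩
    exact @three_to_four S _ Q iQ hdec hw
  tfae_have 4 → 5 := by
    intro h4 A _ hind C hC
    exact subact_indec h4 hind C
  tfae_have 5 → 6 := by
    intro h5 A _ hind _ C hC
    exact h5 A hind C hC
  tfae_have 6 → 7 := by
    intro h6 Q _ hind hinj
    obtain ⟨θ, hθ⟩ := inj_has_zero hinj
    refine ⟨θ, hθ, fun θ' hθ' => ?_⟩
    by_contra hne
    refine h6 Q hind hinj {θ', θ}
      ⟨⟨θ', Or.inl rfl⟩, ?_⟩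
      ⟨{θ'}, {θ}, ⟨⟨θ', rfl⟩, ?_⟩, ⟨⟨θ, rfl⟩, ?_⟩, Set.singleton_union,
        Set.singleton_inter_eq_empty.mpr (by simpa using hne)⟩
    · rintro x (rfl | rfl) s
      · exact Or.inl (hθ' s)
      · exact Or.inr (hθ s)
    · rintro x rfl s
      exact hθ' s
    · rintro x rfl s
      exact hθ s
  tfae_have 7 → 4 := seven_to_four
  tfae_finish
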